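/- Let E be an elliptic curve with split multiplicative reduction over a local field K_v, with Tate parameter q ∈ K_v^×, and let L_w/K_v be a cyclic extension of degree p (p odd). Then E(K_v)/N_{L_w/K_v}E(L_w) has order p if q is a norm from L_w^×, and is trivial otherwise. -/

import Mathlib

/-!
STATEMENT 11: Let `E` be an elliptic curve with split multiplicative reduction over a
local field `K_v`, with Tate parameter `q ∈ K_v^×`, and let `L_w/K_v` be a cyclic
extension of degree `p` (`p` odd).  Then `E(K_v)/N_{L_w/K_v} E(L_w)` has order `p` if
`q` is a norm from `L_w^×`, and is trivial otherwise.

Formalization: by Tate's theory `E(L̄) ≅ L̄^×/q^ℤ` compatibly with the Galois action,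
so we work with the abstract `G`-module `M = L_w^×` (written additively), with generator
`σ` of `G = Gal(L_w/K_v)`; then `K_v^× = M^G` (the fixed points), `E(K_v) = M^G/qℤ`,
and `N E(L_w) = (N(M) + qℤ)/qℤ`, so `E(K_v)/N E(L_w)` is the quotient of the fixed
points of `σ` by the subgroup generated by the norms `cnorm σ p z` and `q`; local class
field theory (`hCFT`) says `K_v^×/N(L_w^×) = M^G/N(M)` has order `p`.
-/


section CyclicCohomology

variable {A : Type*} [AddCommGroup A]

/-- The norm (trace) map of the cyclic group generated by `σ` (of order `p`):
`a ↦ ∑_{i<p} σ^i a`. -/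
def cnorm (σ : A ≃+ A) (p : ℕ) (a : A) : A := ∑ i ∈ Finset.range p, (i • σ : AddAut A) a

/-- 1-cocycles of the cyclic group `⟨σ⟩` (of order `p`) with values in the
`σ`-stable subgroup `B`: elements of `B` killed by the norm. -/
abbrev Z1 (σ : A ≃+ A) (p : ℕ) (B : AddSubgroup A) :=
  {a : A // a ∈ B ∧ cnorm σ p a = 0}

/-- `H¹(⟨σ⟩, B)`: 1-cocycles modulo coboundaries `σ b - b`, `b ∈ B`. -/
abbrev H1 (σ : A ≃+ A) (p : ℕ) (B : AddSubgroup A) :=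
  Quot fun x y : Z1 σ p B => ∃ b ∈ B, x.1 - y.1 = σ b - b

/-- `H²(⟨σ⟩, B)`: fixed points of `B` modulo norms of elements of `B`. -/
abbrev H2 (σ : A ≃+ A) (p : ℕ) (B : AddSubgroup A) :=
  Quot fun x y : {a : A // a ∈ B ∧ σ a = a} => ∃ b ∈ B, x.1 - y.1 = cnorm σ p b

end CyclicCohomology

section SelmerHelpers

variable {G : Type*} [AddCommGroup G]

/-- A `Quot` of a relation given by membership of differences in a subgroup is
equivalent to the quotient group. -/
noncomputable def quotRelEquiv {X : Type*} (r : X → X → Prop) (H : AddSubgroup G)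
    (f : X ≃ G) (hr : ∀ x y, r x y ↔ f x - f y ∈ H) : Quot r ≃ G ⧸ H where
  toFun := Quot.lift (fun x => QuotientAddGroup.mk (f x)) (fun a b h => by
    rw [QuotientAddGroup.eq]
    have h1 := H.neg_mem ((hr a b).mp h)
    rwa [neg_sub, sub_eq_neg_add] at h1)
  invFun := fun g => Quotient.liftOn' g (fun x => Quot.mk r (f.symm x)) (fun a b h => by
    apply Quot.sound
    rw [hr, Equiv.apply_symm_apply, Equiv.apply_symm_apply]
    have h1 := QuotientAddGroup.leftRel_apply.mp h
    have h2 := H.neg_mem h1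
    rwa [neg_add_eq_sub, neg_sub] at h2)
  left_inv := by
    apply Quot.ind
    intro x
    simp
  right_inv := by
    apply Quotient.ind'
    intro g
    simp [QuotientAddGroup.mk]

theorem card_quotRel {X : Type*} (r : X → X → Prop) (H : AddSubgroup G)
    (f : X ≃ G) (hr : ∀ x y, r x y ↔ f x - f y ∈ H) :
    Nat.card (Quot r) = Nat.card (G ⧸ H) :=
  Nat.card_congr (quotRelEquiv r H f hr)

variable {M : Type*} [AddCommGroup M] (σ : M ≃+ M) (p : ℕ)

theorem cnorm_add (a b : M) : cnorm σ p (a + b) = cnorm σ p a + cnorm σ p b := by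
  simp [cnorm, map_add, Finset.sum_add_distrib]

theorem cnorm_neg (a : M) : cnorm σ p (-a) = -cnorm σ p a := by
  simp [cnorm]

theorem cnorm_zsmul (k : ℤ) (a : M) : cnorm σ p (k • a) = k • cnorm σ p a := by
  simp [cnorm, map_zsmul, Finset.smul_sum]

/-- The subgroup of norms. -/
def normSubgroup : AddSubgroup M where
  carrier := Set.range (cnorm σ p)
  zero_mem' := ⟨0, by simp [cnorm]⟩
  add_mem' := by rintro _ _ ⟨a, rfl⟩ ⟨b, rfl⟩; exact ⟨a + b, cnorm_add σ p a b⟩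
  neg_mem' := by rintro _ ⟨a, rfl⟩; exact ⟨-a, cnorm_neg σ p a⟩

theorem mem_normSubgroup {a : M} : a ∈ normSubgroup σ p ↔ ∃ z, cnorm σ p z = a := Iff.rfl

/-- The fixed-point subgroup of `σ`. -/
def fixedSubgroup (σ : M ≃+ M) : AddSubgroup M where
  carrier := {a | σ a = a}
  zero_mem' := map_zero σ
  add_mem' := by intro a b ha hb; simp only [Set.mem_setOf_eq] at *; rw [map_add, ha, hb]
  neg_mem' := by intro a ha; simp only [Set.mem_setOf_eq] at *; rw [map_neg, ha]

theorem sigma_cnorm (hσ : (p • σ : AddAut M) = 0) (a : M) : σ (cnorm σ p a) = cnorm σ p a := by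
  have key : σ (cnorm σ p a) + a = cnorm σ p a + a := by
    have h1 := Finset.sum_range_succ' (fun i => (i • σ : AddAut M) a) p
    have h2 := Finset.sum_range_succ (fun i => (i • σ : AddAut M) a) p
    have h3 : σ (cnorm σ p a) = ∑ i ∈ Finset.range p, ((i + 1) • σ : AddAut M) a := by
      simp only [cnorm, map_sum]
      congr 1; ext i
      rw [succ_nsmul']
      rfl
    rw [h3]
    simp only [zero_nsmul, AddAut.zero_apply] at h1
    rw [← h1, h2, hσ]
    simp [cnorm, AddAut.zero_apply]
  exact add_right_cancel key

theorem norm_le_fixed (hσ : (p • σ : AddAut M) = 0) : normSubgroup σ p ≤ fixedSubgroup σ := by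
  rintro _ ⟨a, rfl⟩
  exact sigma_cnorm σ p hσ a

end SelmerHelpers

open Classical in
theorem selmer_stmt_11 {p : ℕ} (hp : p.Prime) (hodd : Odd p) {M : Type*} [AddCommGroup M]
    (σ : M ≃+ M) (hσ : (p • σ : AddAut M) = 0)
    (hCFT : Nat.card (H2 σ p (⊤ : AddSubgroup M)) = p)
    (q : M) (hq : σ q = q) :
    Nat.card (Quot fun x y : {a : M // σ a = a} =>
        ∃ (z : M) (k : ℤ), x.1 - y.1 = cnorm σ p z + k • q) =
      if ∃ z : M, cnorm σ p z = q then p else 1 := by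
  set F : AddSubgroup M := fixedSubgroup σ with hF
  set N : AddSubgroup M := normSubgroup σ p with hN
  -- the equiv from {a // σ a = a} to F
  let f : {a : M // σ a = a} ≃ F := Equiv.subtypeEquivRight (fun a => Iff.rfl)
  -- the equiv from the H2 subtype to F
  let g : {a : M // a ∈ (⊤ : AddSubgroup M) ∧ σ a = a} ≃ F :=
    Equiv.subtypeEquivRight (fun a => by simp; rfl)
  -- identify H2 with the quotient group F / N'
  have hH2 : Nat.card (H2 σ p (⊤ : AddSubgroup M)) = Nat.card (F ⧸ N.addSubgroupOf F) := by
    apply card_quotRel _ _ g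
    intro x y
    simp only [AddSubgroup.mem_addSubgroupOf]
    constructor
    · rintro ⟨b, -, hb⟩
      exact ⟨b, hb.symm⟩
    · rintro ⟨b, hb⟩
      exact ⟨b, trivial, hb.symm⟩
  have hG : Nat.card (F ⧸ N.addSubgroupOf F) = p := by rw [← hH2]; exact hCFT
  -- identify the LHS with F / K' where K = N ⊔ ℤq
  have hQ : Nat.card (Quot fun x y : {a : M // σ a = a} =>
        ∃ (z : M) (k : ℤ), x.1 - y.1 = cnorm σ p z + k • q) =
      Nat.card (F ⧸ (N ⊔ AddSubgroup.zmultiples q).addSubgroupOf F) := by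
    apply card_quotRel _ _ f
    intro x y
    simp only [AddSubgroup.mem_addSubgroupOf]
    rw [AddSubgroup.mem_sup]
    constructor
    · rintro ⟨z, k, hz⟩
      refine ⟨cnorm σ p z, ⟨z, rfl⟩, k • q, AddSubgroup.mem_zmultiples_iff.mpr ⟨k, rfl⟩, ?_⟩
      have : ((f x - f y : F) : M) = x.1 - y.1 := rfl
      rw [this, hz]
    · rintro ⟨a, ⟨z, rfl⟩, b, hb, hab⟩
      obtain ⟨k, rfl⟩ := AddSubgroup.mem_zmultiples_iff.mp hb
      exact ⟨z, k, hab.symm⟩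
  by_cases hqn : ∃ z : M, cnorm σ p z = q
  · -- q is a norm: K = N
    rw [if_pos hqn]
    have hqle : AddSubgroup.zmultiples q ≤ N :=
      AddSubgroup.zmultiples_le.mpr hqn
    rw [hQ, sup_eq_left.mpr hqle, hG]
  · rw [if_neg hqn]
    -- q is not a norm: the relation is total
    have hfin : Finite (F ⧸ N.addSubgroupOf F) :=
      Nat.finite_of_card_ne_zero (by rw [hG]; exact hp.pos.ne')
    set qb : F ⧸ N.addSubgroupOf F := QuotientAddGroup.mk ⟨q, hq⟩ with hqb
    have hqb0 : qb ≠ 0 := by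
      intro h
      rw [hqb, QuotientAddGroup.eq_zero_iff, AddSubgroup.mem_addSubgroupOf] at h
      exact hqn h
    have hdvd : addOrderOf qb ∣ p := by
      rw [← hG]; exact addOrderOf_dvd_natCard qb
    have hord : addOrderOf qb = p := by
      rcases (Nat.Prime.eq_one_or_self_of_dvd hp _ hdvd) with h | h
      · exact absurd (AddMonoid.addOrderOf_eq_one_iff.mp h) hqb0
      · exact h
    have htop : AddSubgroup.zmultiples qb = ⊤ := by
      apply AddSubgroup.eq_top_of_card_eq
      rw [Nat.card_zmultiples, hord, hG]
    -- every element of F is of the form cnorm z + k * q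
    have hall : ∀ x y : {a : M // σ a = a},
        ∃ (z : M) (k : ℤ), x.1 - y.1 = cnorm σ p z + k • q := by
      intro x y
      set d : F := ⟨x.1 - y.1, F.sub_mem x.2 y.2⟩ with hd
      have : (QuotientAddGroup.mk d : F ⧸ N.addSubgroupOf F) ∈ AddSubgroup.zmultiples qb := by
        rw [htop]; trivial
      obtain ⟨k, hk⟩ := AddSubgroup.mem_zmultiples_iff.mp this
      have hk' : (QuotientAddGroup.mk (d - k • (⟨q, hq⟩ : F)) : F ⧸ N.addSubgroupOf F) = 0 := by
        rw [QuotientAddGroup.mk_sub, sub_eq_zero, ← hk, hqb]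
        rfl
      rw [QuotientAddGroup.eq_zero_iff, AddSubgroup.mem_addSubgroupOf] at hk'
      obtain ⟨z, hz⟩ := hk'
      refine ⟨z, k, ?_⟩
      have : ((d - k • (⟨q, hq⟩ : F) : F) : M) = x.1 - y.1 - k • q := rfl
      rw [this] at hz
      rw [hz]
      abel
    have hsub : Subsingleton (Quot fun x y : {a : M // σ a = a} =>
        ∃ (z : M) (k : ℤ), x.1 - y.1 = cnorm σ p z + k • q) := by
      constructor
      intro a b
      induction a using Quot.ind with | _ a =>
      induction b using Quot.ind with | _ b =>
      exact Quot.sound (hall a b)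
    have hne : Nonempty (Quot fun x y : {a : M // σ a = a} =>
        ∃ (z : M) (k : ℤ), x.1 - y.1 = cnorm σ p z + k • q) :=
      ⟨Quot.mk _ ⟨0, map_zero σ⟩⟩
    exact Nat.card_eq_one_iff_unique.mpr ⟨hsub, hne⟩
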